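/- Over a commutative ring in which 2 is invertible (or a field of characteristic ≠ 2), for 3×3 symmetric matrices, the invariant tr(Y1² Y2^i Y1 Y3^j) for i,j ∈ {1,2} is decomposable: it equals −tr(Y1² Y2^i Y1 Y3^j) modulo products of invariants of lower degree, hence tr(Y1² Y2^i Y1 Y3^j) ≡ 0 modulo decomposable invariants. In particular, there is an identity expressing 2·tr(Y1² Y2^i Y1 Y3^j) as a polynomial in traces and σ-functions of monomials of strictly smaller degree. -/

import Mathlib

open MvPolynomial

/-- The generic 3×3 symmetric matrix `Y k` (k-th of three), with entries the
polynomial variables `X (k, i, j)` for `i ≤ j`, symmetrized. -/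
noncomputable def genSym (F : Type*) [Field F] (k : Fin 3) :
    Matrix (Fin 3) (Fin 3) (MvPolynomial (Fin 3 × Fin 3 × Fin 3) F) :=
  Matrix.of fun i j => if i ≤ j then X (k, i, j) else X (k, j, i)

/-- The product `Y_{w₁} Y_{w₂} ⋯` of generic symmetric matrices along a word `w`. -/
noncomputable def wordProd (F : Type*) [Field F] (w : List (Fin 3)) :
    Matrix (Fin 3) (Fin 3) (MvPolynomial (Fin 3 × Fin 3 × Fin 3) F) :=
  (w.map (genSym F)).prod

/-- Sum of the principal 2×2 minors of a 3×3 matrix. -/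
def sigma2 {R : Type*} [CommRing R] (A : Matrix (Fin 3) (Fin 3) R) : R :=
  (A 0 0 * A 1 1 - A 0 1 * A 1 0) + (A 0 0 * A 2 2 - A 0 2 * A 2 0) +
    (A 1 1 * A 2 2 - A 1 2 * A 2 1)

/-- The `t`-th coefficient `σ_t` of the characteristic polynomial applied to the
monomial in generic symmetric matrices given by the word `w`. -/
noncomputable def sigmaWord (F : Type*) [Field F] (t : ℕ) (w : List (Fin 3)) :
    MvPolynomial (Fin 3 × Fin 3 × Fin 3) F :=
  if t = 1 then (wordProd F w).trace
  else if t = 2 then sigma2 (wordProd F w)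
  else (wordProd F w).det

/- ------------------ auxiliary lemmas ------------------ -/

lemma key_identity {R : Type*} [CommRing R] (A B C : Matrix (Fin 3) (Fin 3) R)
    (hA : A.transpose = A) (hB : B.transpose = B) (hC : C.transpose = C) :
    2 * (A*A*B*A*C).trace =
      B.trace * (A*A*A*C).trace + A.trace * (A*B*A*C).trace
      - A.trace*B.trace*(A*A*C).trace + (A*B).trace*(A*A*C).trace
      + (A*A*B).trace*(A*C).trace - A.trace*(A*B).trace*(A*C).trace
      + sigma2 A * B.trace * (A*C).trace - A.det * (B*C).trace := by
  have a1 : A 1 0 = A 0 1 := by conv_lhs => rw [← hA, Matrix.transpose_apply]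
  have a2 : A 2 0 = A 0 2 := by conv_lhs => rw [← hA, Matrix.transpose_apply]
  have a3 : A 2 1 = A 1 2 := by conv_lhs => rw [← hA, Matrix.transpose_apply]
  have b1 : B 1 0 = B 0 1 := by conv_lhs => rw [← hB, Matrix.transpose_apply]
  have b2 : B 2 0 = B 0 2 := by conv_lhs => rw [← hB, Matrix.transpose_apply]
  have b3 : B 2 1 = B 1 2 := by conv_lhs => rw [← hB, Matrix.transpose_apply]
  have c1 : C 1 0 = C 0 1 := by conv_lhs => rw [← hC, Matrix.transpose_apply]
  have c2 : C 2 0 = C 0 2 := by conv_lhs => rw [← hC, Matrix.transpose_apply]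
  have c3 : C 2 1 = C 1 2 := by conv_lhs => rw [← hC, Matrix.transpose_apply]
  simp only [Matrix.trace_fin_three, Matrix.det_fin_three, Matrix.mul_apply,
    Fin.sum_univ_three, sigma2, a1, a2, a3, b1, b2, b3, c1, c2, c3]
  ring

lemma genSym_symm (F : Type*) [Field F] (k : Fin 3) :
    (genSym F k).transpose = genSym F k := by
  ext i j
  simp only [Matrix.transpose_apply, genSym, Matrix.of_apply]
  rcases le_total i j with h | h
  · rcases eq_or_lt_of_le h with rfl | h'
    · simp
    · rw [if_neg (not_le.mpr h'), if_pos h]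
  · rcases eq_or_lt_of_le h with rfl | h'
    · simp
    · rw [if_pos h, if_neg (not_le.mpr h')]

lemma wordProd_append (F : Type*) [Field F] (u v : List (Fin 3)) :
    wordProd F (u ++ v) = wordProd F u * wordProd F v := by
  simp [wordProd]

lemma wordProd_replicate (F : Type*) [Field F] (n : ℕ) (k : Fin 3) :
    wordProd F (List.replicate n k) = genSym F k ^ n := by
  simp [wordProd, List.map_replicate, List.prod_replicate]

lemma wordProd_cons (F : Type*) [Field F] (k : Fin 3) (w : List (Fin 3)) :
    wordProd F (k :: w) = genSym F k * wordProd F w := by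
  simp [wordProd]

lemma wordProd_nil (F : Type*) [Field F] : wordProd F ([] : List (Fin 3)) = 1 := by
  simp [wordProd]

def genSet (F : Type*) [Field F] (i j : ℕ) : Set (MvPolynomial (Fin 3 × Fin 3 × Fin 3) F) :=
  { p : MvPolynomial (Fin 3 × Fin 3 × Fin 3) F |
          ∃ t ∈ ({1, 2, 3} : Set ℕ), ∃ w : List (Fin 3),
            w ≠ [] ∧ t * w.length < 3 + i + j ∧ p = sigmaWord F t w }

section mems
variable (F : Type*) [Field F] (i j : ℕ)

lemma tr_mem (w : List (Fin 3)) (hw : w ≠ []) (hl : w.length < 3 + i + j) :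
    (wordProd F w).trace ∈ Algebra.adjoin F (genSet F i j) :=
  Algebra.subset_adjoin ⟨1, by simp, w, hw, by simpa using hl, by simp [sigmaWord]⟩

lemma sig2_mem (w : List (Fin 3)) (hw : w ≠ []) (hl : 2 * w.length < 3 + i + j) :
    sigma2 (wordProd F w) ∈ Algebra.adjoin F (genSet F i j) :=
  Algebra.subset_adjoin ⟨2, by simp, w, hw, hl, by norm_num [sigmaWord]⟩

lemma det_mem (w : List (Fin 3)) (hw : w ≠ []) (hl : 3 * w.length < 3 + i + j) :
    (wordProd F w).det ∈ Algebra.adjoin F (genSet F i j) :=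
  Algebra.subset_adjoin ⟨3, by simp, w, hw, hl, by norm_num [sigmaWord]⟩

end mems

theorem stmt_15 (F : Type*) [Field F] (hchar : ringChar F ≠ 2)
    (i j : ℕ) (hi : i = 1 ∨ i = 2) (hj : j = 1 ∨ j = 2) :
    ((genSym F 0) ^ 2 * (genSym F 1) ^ i * genSym F 0 * (genSym F 2) ^ j).trace ∈
      Algebra.adjoin F
        { p : MvPolynomial (Fin 3 × Fin 3 × Fin 3) F |
          ∃ t ∈ ({1, 2, 3} : Set ℕ), ∃ w : List (Fin 3),
            w ≠ [] ∧ t * w.length < 3 + i + j ∧ p = sigmaWord F t w } := by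
  show _ ∈ Algebra.adjoin F (genSet F i j)
  have hi1 : 1 ≤ i := by omega
  have hj1 : 1 ≤ j := by omega
  have h2F : (2 : F) ≠ 0 := Ring.two_ne_zero hchar
  set A := genSym F 0 with hAdef
  set B := genSym F 1 ^ i with hBdef
  set Cm := genSym F 2 ^ j with hCdef
  have hsA : A.transpose = A := genSym_symm F 0
  have hsB : B.transpose = B := by rw [hBdef, Matrix.transpose_pow, genSym_symm]
  have hsC : Cm.transpose = Cm := by rw [hCdef, Matrix.transpose_pow, genSym_symm]
  have hgoal : A ^ 2 * B * A * Cm = A*A*B*A*Cm := by rw [pow_two]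
  rw [hgoal]
  have hkey := key_identity A B Cm hsA hsB hsC
  -- rewrite each factor as a wordProd
  have eB : B = wordProd F (List.replicate i 1) := by rw [wordProd_replicate]
  have eAAAC : A*A*A*Cm = wordProd F ([0,0,0] ++ List.replicate j 2) := by
    simp [wordProd_append, wordProd_cons, wordProd_nil, wordProd_replicate, mul_assoc, hAdef, hBdef, hCdef]
  have eABAC : A*B*A*Cm = wordProd F ([0] ++ List.replicate i 1 ++ [0] ++ List.replicate j 2) := by
    simp [wordProd_append, wordProd_cons, wordProd_nil, wordProd_replicate, mul_assoc, hAdef, hBdef, hCdef]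
  have eA : A = wordProd F [0] := by
    simp [wordProd_cons, wordProd_nil, hAdef]
  have eAAC : A*A*Cm = wordProd F ([0,0] ++ List.replicate j 2) := by
    simp [wordProd_append, wordProd_cons, wordProd_nil, wordProd_replicate, mul_assoc, hAdef, hBdef, hCdef]
  have eAB : A*B = wordProd F ([0] ++ List.replicate i 1) := by
    simp [wordProd_append, wordProd_cons, wordProd_nil, wordProd_replicate, mul_assoc, hAdef, hBdef, hCdef]
  have eAAB : A*A*B = wordProd F ([0,0] ++ List.replicate i 1) := by
    simp [wordProd_append, wordProd_cons, wordProd_nil, wordProd_replicate, mul_assoc, hAdef, hBdef, hCdef]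
  have eAC : A*Cm = wordProd F ([0] ++ List.replicate j 2) := by
    simp [wordProd_append, wordProd_cons, wordProd_nil, wordProd_replicate, mul_assoc, hAdef, hBdef, hCdef]
  have eBC : B*Cm = wordProd F (List.replicate i 1 ++ List.replicate j 2) := by
    simp [wordProd_append, wordProd_replicate, hBdef, hCdef]
  -- membership of each generator
  have m1 : B.trace ∈ Algebra.adjoin F (genSet F i j) := by
    rw [eB]; exact tr_mem F i j _ (by simp <;> omega) (by simp <;> omega)
  have m2 : (A*A*A*Cm).trace ∈ Algebra.adjoin F (genSet F i j) := by
    rw [eAAAC]; exact tr_mem F i j _ (by simp) (by simp <;> omega)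
  have m3 : (A*B*A*Cm).trace ∈ Algebra.adjoin F (genSet F i j) := by
    rw [eABAC]; exact tr_mem F i j _ (by simp) (by simp <;> omega)
  have m4 : A.trace ∈ Algebra.adjoin F (genSet F i j) := by
    rw [eA]; exact tr_mem F i j _ (by simp) (by simp <;> omega)
  have m5 : (A*A*Cm).trace ∈ Algebra.adjoin F (genSet F i j) := by
    rw [eAAC]; exact tr_mem F i j _ (by simp) (by simp <;> omega)
  have m6 : (A*B).trace ∈ Algebra.adjoin F (genSet F i j) := by
    rw [eAB]; exact tr_mem F i j _ (by simp) (by simp <;> omega)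
  have m7 : (A*A*B).trace ∈ Algebra.adjoin F (genSet F i j) := by
    rw [eAAB]; exact tr_mem F i j _ (by simp) (by simp <;> omega)
  have m8 : (A*Cm).trace ∈ Algebra.adjoin F (genSet F i j) := by
    rw [eAC]; exact tr_mem F i j _ (by simp) (by simp <;> omega)
  have m9 : sigma2 A ∈ Algebra.adjoin F (genSet F i j) := by
    rw [eA]; exact sig2_mem F i j [0] (by simp) (by simp <;> omega)
  have m10 : A.det ∈ Algebra.adjoin F (genSet F i j) := by
    rw [eA]; exact det_mem F i j [0] (by simp) (by simp <;> omega)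
  have m11 : (B*Cm).trace ∈ Algebra.adjoin F (genSet F i j) := by
    rw [eBC]; exact tr_mem F i j _ (by simp <;> omega) (by simp <;> omega)
  -- conclude
  have hT : (A*A*B*A*Cm).trace
      = (2⁻¹ : F) • (2 * (A*A*B*A*Cm).trace) := by
    rw [smul_eq_C_mul, ← mul_assoc,
      ← map_ofNat (C : F →+* MvPolynomial (Fin 3 × Fin 3 × Fin 3) F) 2,
      ← C_mul, inv_mul_cancel₀ h2F, C_1, one_mul]
  rw [hT, hkey]
  exact Subalgebra.smul_mem _
    (sub_mem
      (add_mem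
        (sub_mem
          (add_mem
            (add_mem
              (sub_mem (add_mem (mul_mem m1 m2) (mul_mem m4 m3))
                (mul_mem (mul_mem m4 m1) m5))
              (mul_mem m6 m5))
            (mul_mem m7 m8))
          (mul_mem (mul_mem m4 m6) m8))
        (mul_mem (mul_mem m9 m1) m8))
      (mul_mem m10 m11)) _
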